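/- Every twin-free interval graph G has a closed interval representation with all endpoints distinct in which, for each strict containment I(u) ⊂ I(v), there exist vertices x and y such that x peeks into vu from the left and y peeks into vu from the right. -/

import Mathlib

variable {V : Type*}

/-- `I(u)` is strictly contained in `I(v)`. -/
def StrictIn (L R : V → ℝ) (u v : V) : Prop := L v < L u ∧ R u < R v

/-- `x` peeks into `vu` from the left (with `R x ≤ L u`). -/
def PeeksLeft (L R : V → ℝ) (x v u : V) : Prop :=
  (Set.Icc (L x) (R x) ∩ Set.Icc (L v) (R v)).Nonempty ∧
    Set.Icc (L x) (R x) ∩ Set.Icc (L u) (R u) = ∅ ∧ R x ≤ L u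

/-- `x` peeks into `vu` from the right (with `R u ≤ L x`). -/
def PeeksRight (L R : V → ℝ) (x v u : V) : Prop :=
  (Set.Icc (L x) (R x) ∩ Set.Icc (L v) (R v)).Nonempty ∧
    Set.Icc (L x) (R x) ∩ Set.Icc (L u) (R u) = ∅ ∧ R u ≤ L x

/-- All `2|V|` endpoints pairwise distinct. -/
def DistinctEnds (L R : V → ℝ) : Prop :=
  Function.Injective (fun p : V × Bool => if p.2 then R p.1 else L p.1)

/-- Closed interval representation of `G`. -/
def ClosedRep (G : SimpleGraph V) (L R : V → ℝ) : Prop :=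
  (∀ v, L v ≤ R v) ∧
    ∀ u v : V, u ≠ v →
      (G.Adj u v ↔ (Set.Icc (L u) (R u) ∩ Set.Icc (L v) (R v)).Nonempty)

/-- `G` is twin-free: no two distinct vertices have the same closed
neighborhood. -/
def TwinFree (G : SimpleGraph V) : Prop :=
  ∀ u v : V, (∀ w, (G.Adj u w ∨ w = u) ↔ (G.Adj v w ∨ w = v)) → u = v

open Finset

lemma exists_of_filter_card_lt {s : Finset ℝ} {p q : ℝ → Prop}
    [DecidablePred p] [DecidablePred q]
    (h : (s.filter p).card < (s.filter q).card) : ∃ t ∈ s, q t ∧ ¬ p t := by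
  by_contra hc
  push_neg at hc
  have hsub : s.filter q ⊆ s.filter p := by
    intro x hx
    rw [Finset.mem_filter] at hx ⊢
    exact ⟨hx.1, hc x hx.1 hx.2⟩
  exact absurd (Finset.card_le_card hsub) (by omega)

lemma filter_card_lt {s : Finset ℝ} {p q : ℝ → Prop}
    [DecidablePred p] [DecidablePred q]
    (hpq : ∀ t ∈ s, p t → q t) {t : ℝ} (ht : t ∈ s) (hq : q t) (hp : ¬ p t) :
    (s.filter p).card < (s.filter q).card := by
  apply Finset.card_lt_card
  constructor
  · intro x hx
    rw [Finset.mem_filter] at hx ⊢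
    exact ⟨hx.1, hpq x hx.1 hx.2⟩
  · intro hsub
    have := hsub (Finset.mem_filter.mpr ⟨ht, hq⟩)
    exact hp (Finset.mem_filter.mp this).2

lemma exists_ab [Fintype V] (G : SimpleGraph V) (htf : TwinFree G)
    (L₀ R₀ : V → ℝ) (hrep : ClosedRep G L₀ R₀) :
    ∃ a b : V → ℕ,
      (∀ v, a v < b v) ∧
      (∀ u v : V, u ≠ v → (G.Adj u v ↔ (a v < b u ∧ a u < b v))) ∧
      (∀ u v : V, a u = a v → b u = b v → u = v) ∧
      (∀ u : V, 0 < a u → ∃ x, b x = a u) ∧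
      (∀ u v : V, b u < b v → ∃ y, a y = b u) := by
  classical
  obtain ⟨hLR, hadj⟩ := hrep
  set K : ℝ → Finset V := fun t => univ.filter (fun v => L₀ v ≤ t ∧ t ≤ R₀ v) with hK
  have memK : ∀ t v, v ∈ K t ↔ (L₀ v ≤ t ∧ t ≤ R₀ v) := by
    intro t v; simp [hK]
  set F : Finset (Finset V) := univ.image (fun v => K (L₀ v)) with hF
  have hself : ∀ v, v ∈ K (L₀ v) := fun v => (memK _ v).mpr ⟨le_refl _, hLR v⟩
  have hKF : ∀ v, K (L₀ v) ∈ F := fun v => Finset.mem_image.mpr ⟨v, Finset.mem_univ v, rfl⟩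
  -- maximal extension
  have hext : ∀ A ∈ F, ∃ B ∈ F, A ⊆ B ∧ ∀ C ∈ F, B ⊆ C → B = C := by
    intro A hA
    obtain ⟨B, hB, hmax⟩ := Finset.exists_maximal (s := F.filter (fun B => A ⊆ B))
      ⟨A, Finset.mem_filter.mpr ⟨hA, Finset.Subset.refl A⟩⟩
    rw [Finset.mem_filter] at hB
    refine ⟨B, hB.1, hB.2, ?_⟩
    intro C hC hBC
    by_contra hne
    exact hne (le_antisymm hBC (hmax (Finset.mem_filter.mpr ⟨hC, hB.2.trans hBC⟩) hBC))
  set P : V → Prop := fun w =>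
    (∀ C ∈ F, K (L₀ w) ⊆ C → K (L₀ w) = C) ∧ ∀ w' ∈ K (L₀ w), L₀ w' ≤ L₀ w with hP
  set s : Finset ℝ := (univ.filter P).image L₀ with hs
  have hsP : ∀ t ∈ s, ∃ w, P w ∧ L₀ w = t := by
    intro t ht
    obtain ⟨w, hw, hwt⟩ := Finset.mem_image.mp ht
    exact ⟨w, (Finset.mem_filter.mp hw).2, hwt⟩
  -- cover of F
  have hcoverF : ∀ A ∈ F, ∃ t ∈ s, A ⊆ K t := by
    intro A hA
    obtain ⟨B, hBF, hAB, hBmax⟩ := hext A hA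
    obtain ⟨u, -, hBu⟩ := Finset.mem_image.mp hBF
    have hBne : B.Nonempty := ⟨u, hBu ▸ hself u⟩
    obtain ⟨w, hwB, hwmax⟩ := Finset.exists_max_image B L₀ hBne
    have hwKu : w ∈ K (L₀ u) := hBu ▸ hwB
    have hBsub : B ⊆ K (L₀ w) := by
      intro v hv
      rw [memK]
      refine ⟨hwmax v hv, ?_⟩
      have h1 : L₀ w ≤ L₀ u := ((memK _ w).mp hwKu).1
      have h2 : L₀ u ≤ R₀ v := ((memK _ v).mp (hBu ▸ hv)).2
      exact h1.trans h2
    have hKwF : K (L₀ w) ∈ F := hKF w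
    have hBK : B = K (L₀ w) := hBmax _ hKwF hBsub
    have hwP : P w := by
      constructor
      · intro C hC hsub
        rw [← hBK] at hsub ⊢
        exact hBmax C hC hsub
      · intro w' hw'
        rw [← hBK] at hw'
        exact hwmax w' hw'
    refine ⟨L₀ w, Finset.mem_image.mpr ⟨w, Finset.mem_filter.mpr ⟨Finset.mem_univ w, hwP⟩, rfl⟩, ?_⟩
    rw [← hBK]; exact hAB
  -- (i) cover of vertices
  have hcover : ∀ v : V, ∃ t ∈ s, L₀ v ≤ t ∧ t ≤ R₀ v := by
    intro v
    obtain ⟨t, hts, hsub⟩ := hcoverF (K (L₀ v)) (hKF v)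
    exact ⟨t, hts, (memK t v).mp (hsub (hself v))⟩
  -- (ii) adjacency gives a common clique point
  have hcommon : ∀ u v : V, u ≠ v → G.Adj u v →
      ∃ t ∈ s, (L₀ u ≤ t ∧ t ≤ R₀ u) ∧ (L₀ v ≤ t ∧ t ≤ R₀ v) := by
    intro u v hne huv
    obtain ⟨z, hz⟩ := (hadj u v hne).mp huv
    simp only [Set.mem_inter_iff, Set.mem_Icc] at hz
    set p : ℝ := max (L₀ u) (L₀ v) with hp
    have hup : u ∈ K p := (memK p u).mpr ⟨le_max_left _ _, le_trans (max_le hz.1.1 hz.2.1) hz.1.2⟩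
    have hvp : v ∈ K p := (memK p v).mpr ⟨le_max_right _ _, le_trans (max_le hz.1.1 hz.2.1) hz.2.2⟩
    have hpF : K p ∈ F := by
      rcases max_cases (L₀ u) (L₀ v) with ⟨h1, -⟩ | ⟨h1, -⟩ <;> rw [hp, h1] <;> exact hKF _
    obtain ⟨t, hts, hsub⟩ := hcoverF (K p) hpF
    exact ⟨t, hts, (memK t u).mp (hsub hup), (memK t v).mp (hsub hvp)⟩
  -- (iii) incomparability
  have hinc : ∀ t ∈ s, ∀ t' ∈ s, t ≠ t' →
      ∃ x, (L₀ x ≤ t ∧ t ≤ R₀ x) ∧ ¬ (L₀ x ≤ t' ∧ t' ≤ R₀ x) := by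
    intro t ht t' ht' hne
    obtain ⟨w, hw, hwt⟩ := hsP t ht
    obtain ⟨w', hw', hwt'⟩ := hsP t' ht'
    have hKne : ¬ (K t ⊆ K t') := by
      intro hsub
      have heq : K t = K t' := by
        rw [← hwt] at hsub ⊢
        rw [← hwt'] at hsub ⊢
        exact hw.1 _ (hKF w') hsub
      apply hne
      have h1 : L₀ w' ≤ L₀ w := by
        apply hw.2
        rw [hwt, heq, ← hwt']
        exact hself w'
      have h2 : L₀ w ≤ L₀ w' := by
        apply hw'.2
        rw [hwt', ← heq, ← hwt]
        exact hself w
      rw [← hwt, ← hwt']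
      exact le_antisymm h2 h1
    obtain ⟨x, hx1, hx2⟩ := Finset.not_subset.mp hKne
    exact ⟨x, (memK t x).mp hx1, fun h => hx2 ((memK t' x).mpr h)⟩
  -- the integer endpoints
  set a : V → ℕ := fun v => (s.filter (fun t => t < L₀ v)).card with ha
  set b : V → ℕ := fun v => (s.filter (fun t => t ≤ R₀ v)).card with hb
  have hab : ∀ v, a v < b v := by
    intro v
    obtain ⟨t, hts, ht1, ht2⟩ := hcover v
    exact filter_card_lt (fun t' _ h => le_of_lt (lt_of_lt_of_le h (hLR v))) hts ht2
      (not_lt.mpr ht1)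
  -- adjacency forward
  have hadjab : ∀ u v : V, u ≠ v → G.Adj u v → a v < b u ∧ a u < b v := by
    intro u v hne huv
    obtain ⟨t, hts, ⟨hu1, hu2⟩, ⟨hv1, hv2⟩⟩ := hcommon u v hne huv
    constructor
    · exact filter_card_lt (fun t' _ h => le_of_lt (lt_of_lt_of_le h (hv1.trans hu2)))
        hts hu2 (not_lt.mpr hv1)
    · exact filter_card_lt (fun t' _ h => le_of_lt (lt_of_lt_of_le h (hu1.trans hv2)))
        hts hv2 (not_lt.mpr hu1)
  -- adjacency backward (with WLOG on left endpoints)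
  have hadjba' : ∀ u v : V, u ≠ v → L₀ u ≤ L₀ v → a v < b u → G.Adj u v := by
    intro u v hne hL hvu
    obtain ⟨t1, ht1s, ht1R, ht1L⟩ := exists_of_filter_card_lt hvu
    rw [not_lt] at ht1L
    set T : Finset ℝ := s.filter (fun t => L₀ v ≤ t) with hT
    have hTne : T.Nonempty := ⟨t1, Finset.mem_filter.mpr ⟨ht1s, ht1L⟩⟩
    set tst : ℝ := T.min' hTne with htst
    have htstT := T.min'_mem hTne
    rw [Finset.mem_filter] at htstT
    have h1 : tst ≤ R₀ u := le_trans (T.min'_le t1 (Finset.mem_filter.mpr ⟨ht1s, ht1L⟩)) ht1R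
    have h2 : tst ≤ R₀ v := by
      obtain ⟨t₀, ht₀s, ht₀1, ht₀2⟩ := hcover v
      exact le_trans (T.min'_le t₀ (Finset.mem_filter.mpr ⟨ht₀s, ht₀1⟩)) ht₀2
    apply (hadj u v hne).mpr
    refine ⟨tst, ?_⟩
    simp only [Set.mem_inter_iff, Set.mem_Icc]
    exact ⟨⟨hL.trans htstT.2, h1⟩, ⟨htstT.2, h2⟩⟩
  have hadjba : ∀ u v : V, u ≠ v → a v < b u → a u < b v → G.Adj u v := by
    intro u v hne h1 h2
    rcases le_total (L₀ u) (L₀ v) with h | h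
    · exact hadjba' u v hne h h1
    · exact (hadjba' v u (Ne.symm hne) h h2).symm
  have hadjiff : ∀ u v : V, u ≠ v → (G.Adj u v ↔ (a v < b u ∧ a u < b v)) := by
    intro u v hne
    exact ⟨hadjab u v hne, fun h => hadjba u v hne h.1 h.2⟩
  -- injectivity via twin-freeness
  have hinj : ∀ u v : V, a u = a v → b u = b v → u = v := by
    intro u v hau hbu
    by_cases huv : u = v
    · exact huv
    · apply htf
      intro w
      by_cases hwu : w = u
      · subst hwu
        constructor
        · intro _
          left
          exact hadjba v w (Ne.symm huv) (by have h1 := hab v; have h2 := hab w; omega)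
            (by have h1 := hab v; have h2 := hab w; omega)
        · intro _
          right
          rfl
      · by_cases hwv : w = v
        · subst hwv
          constructor
          · intro _
            right
            rfl
          · intro _
            left
            exact hadjba u w huv (by have h1 := hab u; have h2 := hab w; omega)
              (by have h1 := hab u; have h2 := hab w; omega)
        · rw [hadjiff u w (Ne.symm hwu), hadjiff v w (Ne.symm hwv)]
          constructor
          · rintro (h | h)
            · left; omega
            · exact absurd h hwu
          · rintro (h | h)
            · left; omega
            · exact absurd h hwv
  -- left peeker source
  have hleft : ∀ u : V, 0 < a u → ∃ x, b x = a u := by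
    intro u hau
    set S1 : Finset ℝ := s.filter (fun t => t < L₀ u) with hS1
    have hS1ne : S1.Nonempty := Finset.card_pos.mp hau
    set t' : ℝ := S1.max' hS1ne with ht'
    have ht'S := S1.max'_mem hS1ne
    rw [Finset.mem_filter] at ht'S
    set S2 : Finset ℝ := s.filter (fun t => L₀ u ≤ t) with hS2
    have hS2ne : S2.Nonempty := by
      obtain ⟨t₀, ht₀s, ht₀1, ht₀2⟩ := hcover u
      exact ⟨t₀, Finset.mem_filter.mpr ⟨ht₀s, ht₀1⟩⟩
    set t'' : ℝ := S2.min' hS2ne with ht''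
    have ht''S := S2.min'_mem hS2ne
    rw [Finset.mem_filter] at ht''S
    have htne : t' ≠ t'' := ne_of_lt (lt_of_lt_of_le ht'S.2 ht''S.2)
    obtain ⟨x, hx1, hx2⟩ := hinc t' ht'S.1 t'' ht''S.1 htne
    have hRx : R₀ x < t'' := by
      by_contra hc
      push_neg at hc
      exact hx2 ⟨hx1.1.trans (le_of_lt (lt_of_lt_of_le ht'S.2 ht''S.2)), hc⟩
    refine ⟨x, ?_⟩
    show (s.filter (fun t => t ≤ R₀ x)).card = (s.filter (fun t => t < L₀ u)).card
    apply congrArg Finset.card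
    ext t
    simp only [Finset.mem_filter]
    constructor
    · rintro ⟨hts, h⟩
      refine ⟨hts, ?_⟩
      by_contra hc
      push_neg at hc
      have h2 := S2.min'_le t (Finset.mem_filter.mpr ⟨hts, hc⟩)
      linarith
    · rintro ⟨hts, h⟩
      exact ⟨hts, le_trans (S1.le_max' t (Finset.mem_filter.mpr ⟨hts, h⟩)) hx1.2⟩
  -- right peeker source
  have hright : ∀ u v : V, b u < b v → ∃ y, a y = b u := by
    intro u v hbuv
    set S1 : Finset ℝ := s.filter (fun t => t ≤ R₀ u) with hS1
    have hS1ne : S1.Nonempty := by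
      obtain ⟨t₀, ht₀s, ht₀1, ht₀2⟩ := hcover u
      exact ⟨t₀, Finset.mem_filter.mpr ⟨ht₀s, ht₀2⟩⟩
    set t' : ℝ := S1.max' hS1ne with ht'
    have ht'S := S1.max'_mem hS1ne
    rw [Finset.mem_filter] at ht'S
    set S2 : Finset ℝ := s.filter (fun t => R₀ u < t) with hS2
    have hS2ne : S2.Nonempty := by
      obtain ⟨t₁, ht₁s, ht₁1, ht₁2⟩ := exists_of_filter_card_lt hbuv
      push_neg at ht₁2
      exact ⟨t₁, Finset.mem_filter.mpr ⟨ht₁s, ht₁2⟩⟩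
    set t'' : ℝ := S2.min' hS2ne with ht''
    have ht''S := S2.min'_mem hS2ne
    rw [Finset.mem_filter] at ht''S
    have htne : t'' ≠ t' := ne_of_gt (lt_of_le_of_lt ht'S.2 ht''S.2)
    obtain ⟨y, hy1, hy2⟩ := hinc t'' ht''S.1 t' ht'S.1 htne
    have hLy : t' < L₀ y := by
      by_contra hc
      push_neg at hc
      exact hy2 ⟨hc, le_trans (le_of_lt (lt_of_le_of_lt ht'S.2 ht''S.2)) hy1.2⟩
    refine ⟨y, ?_⟩
    show (s.filter (fun t => t < L₀ y)).card = (s.filter (fun t => t ≤ R₀ u)).card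
    apply congrArg Finset.card
    ext t
    simp only [Finset.mem_filter]
    constructor
    · rintro ⟨hts, h⟩
      refine ⟨hts, ?_⟩
      by_contra hc
      push_neg at hc
      have h2 := S2.min'_le t (Finset.mem_filter.mpr ⟨hts, hc⟩)
      have h3 : t < t'' := lt_of_lt_of_le h hy1.1
      linarith
    · rintro ⟨hts, h⟩
      exact ⟨hts, lt_of_le_of_lt (S1.le_max' t (Finset.mem_filter.mpr ⟨hts, h⟩)) hLy⟩
  exact ⟨a, b, hab, hadjiff, hinj, hleft, hright⟩


/-- Every twin-free interval graph has a closed interval representation with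
distinct endpoints satisfying the inclusion property. -/
theorem twinfree_interval_graph_has_rep_with_inclusion_property
    [Fintype V] (G : SimpleGraph V) (htf : TwinFree G)
    (hint : ∃ L R : V → ℝ, ClosedRep G L R) :
    ∃ L R : V → ℝ, ClosedRep G L R ∧ DistinctEnds L R ∧
      ∀ u v : V, StrictIn L R u v →
        (∃ x, PeeksLeft L R x v u) ∧ (∃ y, PeeksRight L R y v u) := by
  classical
  obtain ⟨L₀, R₀, hrep₀⟩ := hint
  obtain ⟨a, b, hab, hadjiff, hinj, hleft, hright⟩ := exists_ab G htf L₀ R₀ hrep₀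
  rw [TwinFree] at htf
  simp only [ClosedRep, DistinctEnds, StrictIn, PeeksLeft, PeeksRight]

  classical
  set k : ℕ := univ.sup b + 1 with hk
  have hbk : ∀ v, b v < k := fun v => Nat.lt_succ_of_le (Finset.le_sup (Finset.mem_univ v))
  set Kr : ℝ := (k : ℝ) with hKrdef
  have hKr1 : (1:ℝ) ≤ Kr := by
    rw [hKrdef]
    exact_mod_cast Nat.one_le_iff_ne_zero.mpr (by omega)
  have hKr0 : (0:ℝ) < 8 * Kr := by linarith
  obtain ⟨L, hLdef⟩ : ∃ L : V → ℝ, ∀ v, L v = (a v : ℝ) - 1/2 + (b v : ℝ)/(8*Kr) :=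
    ⟨_, fun _ => rfl⟩
  obtain ⟨R, hRdef⟩ : ∃ R : V → ℝ, ∀ v, R v = (b v : ℝ) - 3/4 + (a v : ℝ)/(8*Kr) :=
    ⟨_, fun _ => rfl⟩
  have hcast : ∀ {p q : ℕ}, p < q → (p:ℝ) + 1 ≤ (q:ℝ) := by
    intro p q h
    exact_mod_cast h
  have hdivlt : ∀ m : ℕ, m < k → (m:ℝ)/(8*Kr) < 1/8 := by
    intro m hm
    rw [div_lt_iff₀ hKr0]
    have : (m:ℝ) + 1 ≤ Kr := by rw [hKrdef]; exact_mod_cast hm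
    linarith
  have hdivnn : ∀ m : ℕ, (0:ℝ) ≤ (m:ℝ)/(8*Kr) := fun m => by positivity
  have hdivpos : ∀ m : ℕ, 0 < m → (0:ℝ) < (m:ℝ)/(8*Kr) := by
    intro m hm
    apply div_pos _ hKr0
    exact_mod_cast hm
  have hL1 : ∀ v, (a v:ℝ) - 1/2 < L v := by
    intro v
    have := hdivpos (b v) (by have := hab v; omega)
    rw [hLdef v]; linarith
  have hL2 : ∀ v, L v < (a v:ℝ) - 1/4 := by
    intro v
    have := hdivlt (b v) (hbk v)
    rw [hLdef v]; linarith
  have hR1 : ∀ v, (b v:ℝ) - 3/4 ≤ R v := by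
    intro v
    have := hdivnn (a v)
    rw [hRdef v]; linarith
  have hR2 : ∀ v, R v < (b v:ℝ) - 1/2 := by
    intro v
    have := hdivlt (a v) (lt_trans (hab v) (hbk v))
    rw [hRdef v]; linarith
  have hLeR : ∀ v, L v ≤ R v := by
    intro v
    have := hcast (hab v)
    linarith [hL2 v, hR1 v]
  -- div cancellation
  have hdivinj : ∀ p q : ℕ, (p:ℝ)/(8*Kr) = (q:ℝ)/(8*Kr) → p = q := by
    intro p q h
    field_simp at h
    exact_mod_cast h
  have hdivmono : ∀ p q : ℕ, (p:ℝ)/(8*Kr) < (q:ℝ)/(8*Kr) → p < q := by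
    intro p q h
    rw [div_lt_div_iff₀ hKr0 hKr0] at h
    have : (p:ℝ) < q := by nlinarith
    exact_mod_cast this
  refine ⟨L, R, ⟨hLeR, ?_⟩, ?_, ?_⟩
  · -- adjacency
    intro u v hne
    rw [hadjiff u v hne]
    constructor
    · rintro ⟨h1, h2⟩
      have c1 := hcast h1
      have c2 := hcast h2
      refine ⟨max (L u) (L v), ?_⟩
      simp only [Set.mem_inter_iff, Set.mem_Icc]
      exact ⟨⟨le_max_left _ _, max_le (hLeR u) (by linarith [hL2 v, hR1 u])⟩,
        ⟨le_max_right _ _, max_le (by linarith [hL2 u, hR1 v]) (hLeR v)⟩⟩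
    · rintro ⟨z, hz⟩
      simp only [Set.mem_inter_iff, Set.mem_Icc] at hz
      constructor
      · have : (a v:ℝ) < (b u:ℝ) := by linarith [hL1 v, hR2 u, hz.1.2, hz.2.1]
        exact_mod_cast this
      · have : (a u:ℝ) < (b v:ℝ) := by linarith [hL1 u, hR2 v, hz.1.1, hz.2.2]
        exact_mod_cast this
  · -- DistinctEnds
    have haL : ∀ v w : V, L v = L w → a v = a w := by
      intro v w h
      by_contra hc
      rcases Nat.lt_or_ge (a v) (a w) with h1 | h1
      · have := hcast h1; linarith [hL2 v, hL1 w]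
      · have h2 : a w < a v := by omega
        have := hcast h2; linarith [hL2 w, hL1 v]
    have hLvw : ∀ v w : V, L v = L w → v = w := by
      intro v w h
      have ha' := haL v w h
      have haR : (a v:ℝ) = (a w:ℝ) := by exact_mod_cast ha'
      have hb' : b v = b w := by
        apply hdivinj
        rw [hLdef v, hLdef w] at h
        linarith
      exact hinj v w ha' hb'
    have hbR : ∀ v w : V, R v = R w → b v = b w := by
      intro v w h
      by_contra hc
      rcases Nat.lt_or_ge (b v) (b w) with h1 | h1
      · have := hcast h1; linarith [hR2 v, hR1 w]
      · have h2 : b w < b v := by omega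
        have := hcast h2; linarith [hR2 w, hR1 v]
    have hRvw : ∀ v w : V, R v = R w → v = w := by
      intro v w h
      have hb' := hbR v w h
      have hbcast : (b v:ℝ) = (b w:ℝ) := by exact_mod_cast hb'
      have ha' : a v = a w := by
        apply hdivinj
        rw [hRdef v, hRdef w] at h
        linarith
      exact hinj v w ha' hb'
    have hLRne : ∀ v w : V, L v ≠ R w := by
      intro v w h
      have h1 : (a v:ℝ) < (b w:ℝ) := by linarith [hL1 v, hR2 w]
      have h2 : (b w:ℝ) < (a v:ℝ) + 1 := by linarith [hL2 v, hR1 w]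
      have h1' : a v < b w := by exact_mod_cast h1
      have h2' : b w < a v + 1 := by exact_mod_cast h2
      omega
    rintro ⟨v, bv⟩ ⟨w, bw⟩ h
    simp only at h
    cases bv <;> cases bw <;> simp only [if_true, if_false, Bool.false_eq_true] at h
    · exact Prod.ext (hLvw v w h) rfl
    · exact absurd h (hLRne v w)
    · exact absurd h.symm (hLRne w v)
    · exact Prod.ext (hRvw v w h) rfl
  · -- peekers
    intro u v hsi
    obtain ⟨hLvu, hRuv⟩ := hsi
    have hauav : a v ≤ a u := by
      by_contra hc
      push_neg at hc
      have := hcast hc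
      linarith [hL2 u, hL1 v]
    have hbubv : b u ≤ b v := by
      by_contra hc
      push_neg at hc
      have := hcast hc
      linarith [hR2 v, hR1 u]
    have hau : a v < a u := by
      rcases Nat.lt_or_ge (a v) (a u) with h | h
      · exact h
      · exfalso
        have haeq : a v = a u := by omega
        have haeqR : (a v:ℝ) = (a u:ℝ) := by exact_mod_cast haeq
        have hbvu : b v < b u := by
          apply hdivmono
          rw [hLdef v, hLdef u] at hLvu
          linarith
        omega
    have hbuv : b u < b v := by
      rcases Nat.lt_or_ge (b u) (b v) with h | h
      · exact h
      · exfalso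
        have hbeq : b u = b v := by omega
        have hbeqR : (b u:ℝ) = (b v:ℝ) := by exact_mod_cast hbeq
        have havu : a u < a v := by
          apply hdivmono
          rw [hRdef u, hRdef v] at hRuv
          linarith
        omega
    obtain ⟨x, hx⟩ := hleft u (by omega)
    obtain ⟨y, hy⟩ := hright u v hbuv
    have cx : (b x:ℝ) = (a u:ℝ) := by exact_mod_cast hx
    have cy : (a y:ℝ) = (b u:ℝ) := by exact_mod_cast hy
    have cau := hcast hau
    have cbuv := hcast hbuv
    have cabu := hcast (hab u)
    have cabx := hcast (hab x)
    have caby := hcast (hab y)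
    have cabv := hcast (hab v)
    have hRxLu : R x < L u := by linarith [hR2 x, hL1 u]
    have hRuLy : R u < L y := by linarith [hR2 u, hL1 y]
    constructor
    · refine ⟨x, ⟨max (L x) (L v), ?_⟩, ?_, le_of_lt hRxLu⟩
      · simp only [Set.mem_inter_iff, Set.mem_Icc]
        refine ⟨⟨le_max_left _ _, max_le (hLeR x) ?_⟩,
          ⟨le_max_right _ _, max_le ?_ (hLeR v)⟩⟩
        · linarith [hL2 v, hR1 x]
        · linarith [hL2 x, hR1 v]
      · rw [Set.Icc_inter_Icc]
        apply Set.Icc_eq_empty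
        rw [not_le]
        exact lt_of_le_of_lt inf_le_left (lt_of_lt_of_le hRxLu le_sup_right)
    · refine ⟨y, ⟨max (L y) (L v), ?_⟩, ?_, le_of_lt hRuLy⟩
      · simp only [Set.mem_inter_iff, Set.mem_Icc]
        refine ⟨⟨le_max_left _ _, max_le (hLeR y) ?_⟩,
          ⟨le_max_right _ _, max_le ?_ (hLeR v)⟩⟩
        · linarith [hL2 v, hR1 y]
        · linarith [hL2 y, hR1 v]
      · rw [Set.Icc_inter_Icc]
        apply Set.Icc_eq_empty
        rw [not_le]
        exact lt_of_le_of_lt inf_le_right (lt_of_lt_of_le hRuLy le_sup_left)
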